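/- For every nonnegative integer n: ∑_{k=0}^n C(n,k) · {1 + (n−2k)H_k} = 1, i.e. T_n^{(1)} = 1. -/

import Mathlib

noncomputable def H (m : ℕ) : ℚ := ∑ j ∈ Finset.range m, (1 : ℚ) / (j + 1)

lemma H_succ (j : ℕ) : H (j + 1) = H j + 1 / (j + 1) := by
  simp [H, Finset.sum_range_succ]

lemma aux_inv (m : ℕ) :
    ((m : ℚ) + 1) * ∑ j ∈ Finset.range (m + 1), (m.choose j : ℚ) / (j + 1) =
      2 ^ (m + 1) - 1 := by
  rw [Finset.mul_sum]
  have h : ∀ j ∈ Finset.range (m + 1),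
      ((m : ℚ) + 1) * ((m.choose j : ℚ) / (j + 1)) = ((m + 1).choose (j + 1) : ℚ) := by
    intro j _
    have hn := Nat.add_one_mul_choose_eq m j
    have hq : ((m : ℚ) + 1) * (m.choose j : ℚ) = ((m + 1).choose (j + 1) : ℚ) * (j + 1) := by
      exact_mod_cast congrArg (Nat.cast : ℕ → ℚ) hn
    have hj : ((j : ℚ) + 1) ≠ 0 := by positivity
    field_simp
    linarith [hq]
  rw [Finset.sum_congr rfl h]
  have h2 : ∑ k ∈ Finset.range (m + 2), ((m + 1).choose k : ℚ) = 2 ^ (m + 1) := by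
    exact_mod_cast congrArg (Nat.cast : ℕ → ℚ) (Nat.sum_range_choose (m + 1))
  have h3 := Finset.sum_range_succ' (fun k => ((m + 1).choose k : ℚ)) (m + 1)
  simp only [Nat.choose_zero_right, Nat.cast_one] at h3
  rw [h3] at h2
  linarith

theorem paule_schneider_one (n : ℕ) :
    ∑ k ∈ Finset.range (n + 1),
      ((n.choose k : ℚ))^(1 : ℕ) * (1 + (1) * ((n : ℚ) - 2*k) * H k) =
      1 := by
  simp only [pow_one, one_mul, mul_add, mul_one]
  rw [Finset.sum_add_distrib]
  have hbin : ∑ k ∈ Finset.range (n + 1), (n.choose k : ℚ) = 2 ^ n := by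
    exact_mod_cast congrArg (Nat.cast : ℕ → ℚ) (Nat.sum_range_choose n)
  have hA : ∑ k ∈ Finset.range (n + 1),
      (n.choose k : ℚ) * (((n : ℚ) - 2 * k) * H k) = 1 - 2 ^ n := by
    cases n with
    | zero => simp [H]
    | succ m =>
      -- drop the k = 0 term (H 0 = 0) and shift
      push_cast
      rw [Finset.sum_range_succ' (fun k =>
        ((m + 1).choose k : ℚ) * ((((m : ℚ) + 1) - 2 * (k : ℚ)) * H k))]
      have h0 : H 0 = 0 := by simp [H]
      push_cast
      rw [h0]
      simp only [mul_zero, zero_mul, add_zero]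
      -- pointwise rewrite of the shifted term
      have hpt : ∀ j ∈ Finset.range (m + 1),
          ((m + 1).choose (j + 1) : ℚ) * ((((m : ℚ) + 1) - 2 * ((j : ℚ) + 1)) * H (j + 1)) =
          ((m : ℚ) + 1) * ((m.choose (j + 1) : ℚ) * H (j + 1))
            - ((m : ℚ) + 1) * ((m.choose j : ℚ) * H (j + 1)) := by
        intro j hj
        have hjm : j + 1 ≤ m + 1 := by
          have := Finset.mem_range.mp hj; omega
        have h1 : ((m : ℚ) + 1) * (m.choose (j + 1) : ℚ) =
            ((m + 1).choose (j + 1) : ℚ) * ((m : ℚ) - j) := by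
          have hn := Nat.choose_mul_succ_eq m (j + 1)
          have hq : (m.choose (j + 1) : ℚ) * ((m : ℚ) + 1) =
              ((m + 1).choose (j + 1) : ℚ) * ((m + 1 - (j + 1) : ℕ) : ℚ) := by
            exact_mod_cast congrArg (Nat.cast : ℕ → ℚ) hn
          have hsub : ((m + 1 - (j + 1) : ℕ) : ℚ) = (m : ℚ) - j := by
            have hjle : j ≤ m := by omega
            rw [show m + 1 - (j + 1) = m - j from by omega, Nat.cast_sub hjle]
          rw [hsub] at hq
          linarith
        have h2 : ((m : ℚ) + 1) * (m.choose j : ℚ) =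
            ((m + 1).choose (j + 1) : ℚ) * ((j : ℚ) + 1) := by
          have hn := Nat.add_one_mul_choose_eq m j
          exact_mod_cast congrArg (Nat.cast : ℕ → ℚ) hn
        have : ((m : ℚ) + 1) * (m.choose (j + 1) : ℚ)
            - ((m : ℚ) + 1) * (m.choose j : ℚ) =
            ((m + 1).choose (j + 1) : ℚ) * (((m : ℚ) + 1) - 2 * ((j : ℚ) + 1)) := by
          rw [h1, h2]; ring
        calc ((m + 1).choose (j + 1) : ℚ) * ((((m : ℚ) + 1) - 2 * ((j : ℚ) + 1)) * H (j + 1))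
            = (((m + 1).choose (j + 1) : ℚ) * (((m : ℚ) + 1) - 2 * ((j : ℚ) + 1))) * H (j + 1) := by ring
          _ = (((m : ℚ) + 1) * (m.choose (j + 1) : ℚ)
              - ((m : ℚ) + 1) * (m.choose j : ℚ)) * H (j + 1) := by rw [← this]
          _ = _ := by ring
      rw [Finset.sum_congr rfl hpt]
      rw [Finset.sum_sub_distrib]
      -- first sum: shift back
      have hshift : ∑ j ∈ Finset.range (m + 1),
          ((m : ℚ) + 1) * ((m.choose (j + 1) : ℚ) * H (j + 1)) =
          ∑ k ∈ Finset.range (m + 1), ((m : ℚ) + 1) * ((m.choose k : ℚ) * H k) := by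
        have h4 := Finset.sum_range_succ' (fun k => ((m : ℚ) + 1) * ((m.choose k : ℚ) * H k)) (m + 1)
        have h5 : ∑ k ∈ Finset.range (m + 2), ((m : ℚ) + 1) * ((m.choose k : ℚ) * H k) =
            ∑ k ∈ Finset.range (m + 1), ((m : ℚ) + 1) * ((m.choose k : ℚ) * H k) := by
          rw [Finset.sum_range_succ]
          simp [Nat.choose_succ_self]
        rw [h5] at h4
        rw [h0] at h4
        simpa using h4.symm
      rw [hshift]
      -- second sum: split H (j+1)
      have hsplit : ∑ j ∈ Finset.range (m + 1),
          ((m : ℚ) + 1) * ((m.choose j : ℚ) * H (j + 1)) =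
          ∑ j ∈ Finset.range (m + 1), ((m : ℚ) + 1) * ((m.choose j : ℚ) * H j)
          + ((m : ℚ) + 1) * ∑ j ∈ Finset.range (m + 1), (m.choose j : ℚ) / (j + 1) := by
        rw [Finset.mul_sum, ← Finset.sum_add_distrib]
        refine Finset.sum_congr rfl fun j _ => ?_
        rw [H_succ]
        ring
      rw [hsplit, aux_inv]
      ring
  rw [hbin, hA]
  ring
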